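/- Let h be monic of degree N, μ a positive measure with hdμ = dμ₀, {R_n} the monic orthogonal polynomials for μ, and {P_n^*} the monic orthogonal polynomials for a quasi-definite multiple Geronimus transform B of μ₀ (B(hf,g)=∫fg dμ₀). Then for each n there exist real numbers B_j^{[n]} with h(t) P_n^*(t) = R_{n+N}(t) + B_{n+N−1}^{[n]} R_{n+N−1}(t) + ⋯ + B_{n−N}^{[n]} R_{n−N}(t); in particular the coefficient of R_k in the expansion of h·P_n^* vanishes for k < n − N, and equivalently ∫ P_{n+N}^* R_k dμ₀ = 0 for all k < n. -/

import Mathlib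

open Polynomial MeasureTheory

lemma span_aux_R (R : ℕ → Polynomial ℝ) (hRmonic : ∀ n, (R n).Monic)
    (hRdeg : ∀ n, (R n).natDegree = n) :
    ∀ m : ℕ, ∀ p : Polynomial ℝ, p.degree < (m : WithBot ℕ) →
      ∃ c : ℕ → ℝ, p = ∑ k ∈ Finset.range m, C (c k) * R k := by
  intro m
  induction m with
  | zero =>
    intro p hp
    refine ⟨0, ?_⟩
    have : p.degree = ⊥ := by
      simpa [Nat.WithBot.lt_zero_iff] using hp
    simp [degree_eq_bot.mp this]
  | succ m ih =>
    intro p hp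
    set c0 := p.coeff m with hc0
    have hRm1 : (R m).coeff m = 1 := by
      have := (hRmonic m).coeff_natDegree
      rwa [hRdeg m] at this
    have hq : (p - C c0 * R m).degree < (m : WithBot ℕ) := by
      rw [degree_lt_iff_coeff_zero]
      intro j hj
      have hj' : m ≤ j := by exact_mod_cast hj
      rcases eq_or_lt_of_le hj' with hje | hjl
      · simp [← hje, coeff_C_mul, hRm1, hc0]
      · have h1 : p.coeff j = 0 := by
          apply coeff_eq_zero_of_degree_lt
          refine lt_of_lt_of_le hp ?_
          exact_mod_cast Nat.cast_le.mpr hjl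
        have h2 : (R m).coeff j = 0 := by
          apply coeff_eq_zero_of_natDegree_lt
          rw [hRdeg m]; exact hjl
        simp [h1, coeff_C_mul, h2]
    obtain ⟨c, hc⟩ := ih _ hq
    refine ⟨Function.update c m c0, ?_⟩
    rw [Finset.sum_range_succ, Function.update_self]
    have hsum : ∑ k ∈ Finset.range m, C (Function.update c m c0 k) * R k
        = ∑ k ∈ Finset.range m, C (c k) * R k := by
      apply Finset.sum_congr rfl
      intro k hk
      rw [Function.update_of_ne (Nat.ne_of_lt (Finset.mem_range.mp hk))]
    rw [hsum, ← hc]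
    ring

theorem hPstar_expansion_in_R (N : ℕ) (hN : 1 ≤ N)
    (h : Polynomial ℝ) (hmonic : h.Monic) (hdeg : h.natDegree = N)
    (μ : Measure ℝ) (hint : ∀ f : Polynomial ℝ, Integrable (fun t => f.eval t) μ)
    (R : ℕ → Polynomial ℝ)
    (hRmonic : ∀ n, (R n).Monic) (hRdeg : ∀ n, (R n).natDegree = n)
    (hRorth : ∀ n : ℕ, ∀ q : Polynomial ℝ, q.degree < n →
      ∫ t, (R n).eval t * q.eval t ∂μ = 0)
    (hRpos : ∀ n, 0 < ∫ t, (R n).eval t ^ 2 ∂μ)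
    (B : Polynomial ℝ →ₗ[ℝ] Polynomial ℝ →ₗ[ℝ] ℝ)
    (hsym : ∀ f g, B f g = B g f)
    (hrel : ∀ f g, B (h * f) g = ∫ t, f.eval t * g.eval t * h.eval t ∂μ)
    (hrel' : ∀ f g, B f (h * g) = ∫ t, f.eval t * g.eval t * h.eval t ∂μ)
    (Pstar : ℕ → Polynomial ℝ)
    (hQmonic : ∀ n, (Pstar n).Monic) (hQdeg : ∀ n, (Pstar n).natDegree = n)
    (hQorth : ∀ n : ℕ, ∀ q : Polynomial ℝ, q.degree < n → B (Pstar n) q = 0)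
    (hQnd : ∀ n, B (Pstar n) (Pstar n) ≠ 0) :
    ∀ n : ℕ,
      (∃ b : ℕ → ℝ, h * Pstar n =
        R (n + N) + ∑ k ∈ Finset.Ico (n - N) (n + N), C (b k) * R k) ∧
      (∀ k < n, ∫ t, (Pstar (n + N)).eval t * (R k).eval t * h.eval t ∂μ = 0) := by
  have hint2 : ∀ f g : Polynomial ℝ, Integrable (fun t => f.eval t * g.eval t) μ := by
    intro f g
    simpa [eval_mul] using hint (f * g)
  have hdegR : ∀ k : ℕ, (R k).degree = (k : WithBot ℕ) := fun k => by
    rw [degree_eq_natDegree (hRmonic k).ne_zero, hRdeg]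
  have hdeghR : ∀ k : ℕ, (h * R k).degree = ((N + k : ℕ) : WithBot ℕ) := by
    intro k
    rw [degree_eq_natDegree (hmonic.mul (hRmonic k)).ne_zero,
      natDegree_mul hmonic.ne_zero (hRmonic k).ne_zero, hdeg, hRdeg]
  have horthRR : ∀ j k : ℕ, j ≠ k → ∫ t, (R j).eval t * (R k).eval t ∂μ = 0 := by
    intro j k hjk
    rcases lt_or_gt_of_ne hjk with hl | hl
    · have heq : (fun t => (R j).eval t * (R k).eval t)
          = fun t => (R k).eval t * (R j).eval t := by
        funext t; ring
      rw [heq]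
      exact hRorth k (R j) (by rw [hdegR j]; exact_mod_cast hl)
    · exact hRorth j (R k) (by rw [hdegR k]; exact_mod_cast hl)
  -- key: B (Pstar n) against h * R k is the μ-integral
  have hBint : ∀ n k : ℕ, ∫ t, (Pstar n).eval t * (R k).eval t * h.eval t ∂μ
      = B (Pstar n) (h * R k) := fun n k => (hrel' _ _).symm
  have hBzero : ∀ n k : ℕ, N + k < n →
      ∫ t, (Pstar n).eval t * (R k).eval t * h.eval t ∂μ = 0 := by
    intro n k hk
    rw [hBint]
    exact hQorth n _ (by rw [hdeghR k]; exact_mod_cast hk)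
  intro n
  constructor
  · -- expansion part
    have hmul : (h * Pstar n).Monic := hmonic.mul (hQmonic n)
    have hdmul : (h * Pstar n).degree = ((n + N : ℕ) : WithBot ℕ) := by
      rw [degree_eq_natDegree hmul.ne_zero,
        natDegree_mul hmonic.ne_zero (hQmonic n).ne_zero, hdeg, hQdeg, Nat.add_comm]
    have hsub : (h * Pstar n - R (n + N)).degree < ((n + N : ℕ) : WithBot ℕ) := by
      have := degree_sub_lt (hdmul.trans (hdegR (n + N)).symm) hmul.ne_zero
        (by rw [hmul.leadingCoeff, (hRmonic (n + N)).leadingCoeff])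
      rwa [hdmul] at this
    obtain ⟨c, hc⟩ := span_aux_R R hRmonic hRdeg (n + N) _ hsub
    have hzero : ∀ k, k < n - N → c k = 0 := by
      intro k hk
      have hkN : N + k < n := by omega
      have hkNN : k < n + N := by omega
      -- integral of the expansion against R k
      have e1 : ∫ t, (h * Pstar n - R (n + N)).eval t * (R k).eval t ∂μ
          = ∑ j ∈ Finset.range (n + N), c j * ∫ t, (R j).eval t * (R k).eval t ∂μ := by
        rw [hc]
        have heq : (fun t => (∑ j ∈ Finset.range (n + N), C (c j) * R j).eval t * (R k).eval t)
            = fun t => ∑ j ∈ Finset.range (n + N), c j * ((R j).eval t * (R k).eval t) := by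
          funext t
          rw [eval_finset_sum, Finset.sum_mul]
          apply Finset.sum_congr rfl
          intro j _
          simp [eval_mul]; ring
        rw [heq, integral_finset_sum]
        · exact Finset.sum_congr rfl fun j _ => integral_const_mul _ _
        · intro j _
          exact (hint2 (R j) (R k)).const_mul (c j)
      have e2 : ∫ t, (h * Pstar n - R (n + N)).eval t * (R k).eval t ∂μ = 0 := by
        have heq : (fun t => (h * Pstar n - R (n + N)).eval t * (R k).eval t)
            = fun t => (Pstar n).eval t * (R k).eval t * h.eval t
              - (R (n + N)).eval t * (R k).eval t := by
          funext t
          simp [eval_sub, eval_mul]; ring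
        rw [heq, integral_sub]
        · rw [hBzero n k hkN, horthRR (n + N) k (by omega), sub_zero]
        · have : (fun t => (Pstar n).eval t * (R k).eval t * h.eval t)
              = fun t => ((Pstar n) * (R k) * h).eval t := by
            funext t; simp [eval_mul]
          rw [this]; exact hint _
        · exact hint2 _ _
      have e3 : ∑ j ∈ Finset.range (n + N), c j * ∫ t, (R j).eval t * (R k).eval t ∂μ
          = c k * ∫ t, (R k).eval t ^ 2 ∂μ := by
        rw [Finset.sum_eq_single k]
        · congr 1
          apply integral_congr_ae
          filter_upwards with t
          ring
        · intro j _ hj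
          rw [horthRR j k hj, mul_zero]
        · intro hk'
          exact absurd (Finset.mem_range.mpr hkNN) hk'
      have : c k * ∫ t, (R k).eval t ^ 2 ∂μ = 0 := by rw [← e3, ← e1, e2]
      exact (mul_eq_zero.mp this).resolve_right (ne_of_gt (hRpos k))
    refine ⟨c, ?_⟩
    have hsplit : ∑ j ∈ Finset.range (n + N), C (c j) * R j
        = ∑ j ∈ Finset.Ico (n - N) (n + N), C (c j) * R j := by
      rw [Finset.range_eq_Ico,
        ← Finset.sum_Ico_consecutive _ (Nat.zero_le (n - N)) (by omega)]
      have hz : ∑ j ∈ Finset.Ico 0 (n - N), C (c j) * R j = 0 := by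
        apply Finset.sum_eq_zero
        intro j hj
        rw [hzero j (Finset.mem_Ico.mp hj).2]
        simp
      rw [hz, zero_add]
    rw [← hsplit, ← hc]
    ring
  · intro k hk
    exact hBzero (n + N) k (by omega)
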